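/- Let R > 0, let U ⊆ ℝ³ be an open set containing the sphere S_R = {x ∈ ℝ³ : |x| = R}, and let F : U → ℝ³ be C¹ with DF(x) invertible for every x ∈ S_R and F(x) = x for all x ∈ S_R. Then for every x ∈ S_R and every E ∈ ℂ³, with ν = x/|x| the unit outward normal, one has ν × ((DF(x)ᵀ)⁻¹E) = ν × E; in particular the tangential component of the pulled-back field (DFᵀ)⁻¹E agrees with that of E on the sphere. -/

import Mathlib

/-- The Euclidean norm on `Fin 3 → ℝ`. -/
noncomputable def enorm3 (x : Fin 3 → ℝ) : ℝ := Real.sqrt (x 0 ^ 2 + x 1 ^ 2 + x 2 ^ 2)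

/-- The Jacobian matrix of a map `F : ℝ³ → ℝ³` at a point `y`. -/
noncomputable def jac (F : (Fin 3 → ℝ) → (Fin 3 → ℝ)) (y : Fin 3 → ℝ) :
    Matrix (Fin 3) (Fin 3) ℝ :=
  Matrix.of fun i j => fderiv ℝ F y (Pi.single j 1) i

/-- A real 3×3 matrix acting componentwise on ℂ³. -/
noncomputable def mulVecC (M : Matrix (Fin 3) (Fin 3) ℝ) (v : Fin 3 → ℂ) : Fin 3 → ℂ :=
  (M.map (fun a => (a : ℂ))).mulVec v

/-- Cross product of a real vector with a complex vector (componentwise on real and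
imaginary parts). -/
noncomputable def crossRC (v : Fin 3 → ℝ) (w : Fin 3 → ℂ) : Fin 3 → ℂ :=
  ![(v 1 : ℂ) * w 2 - (v 2 : ℂ) * w 1,
    (v 2 : ℂ) * w 0 - (v 0 : ℂ) * w 2,
    (v 0 : ℂ) * w 1 - (v 1 : ℂ) * w 0]

open Matrix

lemma enorm3_sq' {x : Fin 3 → ℝ} {R : ℝ} (h : enorm3 x = R) :
    x 0 ^ 2 + x 1 ^ 2 + x 2 ^ 2 = R ^ 2 := by
  have h0 : (0:ℝ) ≤ x 0 ^ 2 + x 1 ^ 2 + x 2 ^ 2 := by positivity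
  have := congrArg (· ^ 2) h
  simpa [enorm3, Real.sq_sqrt h0] using this

lemma jac_mulVec (F : (Fin 3 → ℝ) → (Fin 3 → ℝ)) (y v : Fin 3 → ℝ) :
    (jac F y).mulVec v = fderiv ℝ F y v := by
  have hv : v = v 0 • (Pi.single 0 1 : Fin 3 → ℝ) + v 1 • (Pi.single 1 1 : Fin 3 → ℝ)
      + v 2 • (Pi.single 2 1 : Fin 3 → ℝ) := by
    funext i; fin_cases i <;> simp [Pi.single_apply]
  funext i
  conv_rhs => rw [hv]
  simp [jac, Matrix.mulVec, dotProduct, Fin.sum_univ_three]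
  ring

lemma key_real (x : Fin 3 → ℝ) (M : Matrix (Fin 3) (Fin 3) ℝ) (hM : IsUnit M)
    (hfixM : ∀ v : Fin 3 → ℝ, v ⬝ᵥ x = 0 → M *ᵥ v = v) (e : Fin 3 → ℝ) :
    crossProduct x ((Mᵀ)⁻¹ *ᵥ e) = crossProduct x e := by
  have hdet : IsUnit Mᵀ.det := by
    rw [Matrix.det_transpose]; exact ((Matrix.isUnit_iff_isUnit_det M).mp hM)
  have hNe : Mᵀ *ᵥ ((Mᵀ)⁻¹ *ᵥ e) = e := by
    rw [Matrix.mulVec_mulVec, Matrix.mul_nonsing_inv _ hdet, Matrix.one_mulVec]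
  set w : Fin 3 → ℝ := (Mᵀ)⁻¹ *ᵥ e - e with hw
  have hperp : ∀ v : Fin 3 → ℝ, v ⬝ᵥ x = 0 → w ⬝ᵥ v = 0 := by
    intro v hv
    have h1 : w ⬝ᵥ v = w ⬝ᵥ (M *ᵥ v) := by rw [hfixM v hv]
    have h2 : w ⬝ᵥ (M *ᵥ v) = (Mᵀ *ᵥ w) ⬝ᵥ v := by
      rw [dotProduct_mulVec, Matrix.mulVec_transpose]
    have h3 : Mᵀ *ᵥ w = e - Mᵀ *ᵥ e := by
      rw [hw, Matrix.mulVec_sub, hNe]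
    have h4 : (Mᵀ *ᵥ e) ⬝ᵥ v = e ⬝ᵥ v := by
      rw [Matrix.mulVec_transpose, ← dotProduct_mulVec, hfixM v hv]
    rw [h1, h2, h3, sub_dotProduct, h4, sub_self]
  have hx0 : (crossProduct x (crossProduct x w)) ⬝ᵥ x = 0 := by
    simp [cross_apply, dotProduct, Fin.sum_univ_three]; ring
  have htriple : w ⬝ᵥ (crossProduct x (crossProduct x w))
      = -((crossProduct x w) ⬝ᵥ (crossProduct x w)) := by
    simp [cross_apply, dotProduct, Fin.sum_univ_three]; ring
  have hz := hperp _ hx0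
  rw [htriple, neg_eq_zero] at hz
  have hcw : crossProduct x w = 0 := by
    set u := crossProduct x w with hu
    simp only [dotProduct, Fin.sum_univ_three] at hz
    funext i
    have h0 : u 0 * u 0 = 0 := by
      nlinarith [mul_self_nonneg (u 0), mul_self_nonneg (u 1), mul_self_nonneg (u 2)]
    have h1 : u 1 * u 1 = 0 := by
      nlinarith [mul_self_nonneg (u 0), mul_self_nonneg (u 1), mul_self_nonneg (u 2)]
    have h2 : u 2 * u 2 = 0 := by
      nlinarith [mul_self_nonneg (u 0), mul_self_nonneg (u 1), mul_self_nonneg (u 2)]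
    fin_cases i
    · simpa using mul_self_eq_zero.mp h0
    · simpa using mul_self_eq_zero.mp h1
    · simpa using mul_self_eq_zero.mp h2
  have : crossProduct x ((Mᵀ)⁻¹ *ᵥ e) - crossProduct x e = 0 := by
    rw [← map_sub, ← hw, hcw]
  exact sub_eq_zero.mp this

lemma tangent_fix (R : ℝ) (hR : 0 < R) (U : Set (Fin 3 → ℝ)) (hU : IsOpen U)
    (hsub : {x : Fin 3 → ℝ | enorm3 x = R} ⊆ U)
    (F : (Fin 3 → ℝ) → (Fin 3 → ℝ)) (hF : ContDiffOn ℝ 1 F U)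
    (hfix : ∀ x : Fin 3 → ℝ, enorm3 x = R → F x = x)
    (x : Fin 3 → ℝ) (hx : enorm3 x = R)
    (v : Fin 3 → ℝ) (hv : v ⬝ᵥ x = 0) : fderiv ℝ F x v = v := by
  rcases eq_or_ne v 0 with rfl | hvne
  · simp
  have hS : 0 < v 0 ^ 2 + v 1 ^ 2 + v 2 ^ 2 := by
    by_contra h
    push_neg at h
    apply hvne
    have e0 : v 0 ^ 2 = 0 := le_antisymm (by nlinarith [sq_nonneg (v 1), sq_nonneg (v 2)]) (sq_nonneg _)
    have e1 : v 1 ^ 2 = 0 := le_antisymm (by nlinarith [sq_nonneg (v 0), sq_nonneg (v 2)]) (sq_nonneg _)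
    have e2 : v 2 ^ 2 = 0 := le_antisymm (by nlinarith [sq_nonneg (v 0), sq_nonneg (v 1)]) (sq_nonneg _)
    funext i
    fin_cases i
    · exact sq_eq_zero_iff.mp e0
    · exact sq_eq_zero_iff.mp e1
    · exact sq_eq_zero_iff.mp e2
  set s : ℝ := Real.sqrt (v 0 ^ 2 + v 1 ^ 2 + v 2 ^ 2) with hs
  have hspos : 0 < s := Real.sqrt_pos.mpr hS
  have hs2 : s ^ 2 = v 0 ^ 2 + v 1 ^ 2 + v 2 ^ 2 := Real.sq_sqrt hS.le
  set u : Fin 3 → ℝ := (R / s) • v with hu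
  have hx2 : x 0 ^ 2 + x 1 ^ 2 + x 2 ^ 2 = R ^ 2 := enorm3_sq' hx
  have hu2 : u 0 ^ 2 + u 1 ^ 2 + u 2 ^ 2 = R ^ 2 := by
    simp only [hu, Pi.smul_apply, smul_eq_mul]
    field_simp
    nlinarith [hs2]
  have hd : x 0 * u 0 + x 1 * u 1 + x 2 * u 2 = 0 := by
    simp only [dotProduct, Fin.sum_univ_three] at hv
    simp only [hu, Pi.smul_apply, smul_eq_mul]
    linear_combination (R / s) * hv
  set γ : ℝ → (Fin 3 → ℝ) := fun t => Real.cos t • x + Real.sin t • u with hγdef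
  have hγ : ∀ t, enorm3 (γ t) = R := by
    intro t
    have hA : (γ t 0) ^ 2 + (γ t 1) ^ 2 + (γ t 2) ^ 2 = R ^ 2 := by
      simp only [hγdef, Pi.add_apply, Pi.smul_apply, smul_eq_mul]
      linear_combination (Real.cos t) ^ 2 * hx2 + (Real.sin t) ^ 2 * hu2
        + 2 * Real.cos t * Real.sin t * hd + R ^ 2 * (Real.sin_sq_add_cos_sq t)
    rw [enorm3, hA, Real.sqrt_sq hR.le]
  have hγ0 : γ 0 = x := by simp [hγdef]
  have hderiv : HasDerivAt γ u 0 := by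
    have h1 : HasDerivAt (fun t => Real.cos t • x) ((-Real.sin 0) • x) 0 :=
      (Real.hasDerivAt_cos 0).smul_const x
    have h2 : HasDerivAt (fun t => Real.sin t • u) ((Real.cos 0) • u) 0 :=
      (Real.hasDerivAt_sin 0).smul_const u
    have := h1.add h2
    exact (by simpa using this : HasDerivAt ((fun t => Real.cos t • x) + fun t => Real.sin t • u) u 0)
  have hxU : x ∈ U := hsub hx
  have hdiff : DifferentiableAt ℝ F x :=
    (hF.contDiffAt (hU.mem_nhds hxU)).differentiableAt one_ne_zero
  have hdF : HasFDerivAt F (fderiv ℝ F x) x := hdiff.hasFDerivAt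
  have hcomp : HasDerivAt (F ∘ γ) (fderiv ℝ F x u) 0 := by
    refine HasFDerivAt.comp_hasDerivAt 0 ?_ hderiv
    rw [hγ0]; exact hdF
  have hFγ : F ∘ γ = γ := by
    funext t; exact hfix _ (hγ t)
  rw [hFγ] at hcomp
  have hLu : fderiv ℝ F x u = u := hcomp.unique hderiv
  have hvu : v = (s / R) • u := by
    rw [hu, smul_smul]
    rw [show s / R * (R / s) = 1 by field_simp]
    simp
  rw [hvu, (fderiv ℝ F x).map_smul, hLu]

lemma crossRC_re (v : Fin 3 → ℝ) (w : Fin 3 → ℂ) (i : Fin 3) :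
    (crossRC v w i).re = crossProduct v (fun j => (w j).re) i := by
  fin_cases i <;> simp [crossRC, cross_apply]

lemma crossRC_im (v : Fin 3 → ℝ) (w : Fin 3 → ℂ) (i : Fin 3) :
    (crossRC v w i).im = crossProduct v (fun j => (w j).im) i := by
  fin_cases i <;> simp [crossRC, cross_apply]

lemma mulVecC_re (N : Matrix (Fin 3) (Fin 3) ℝ) (E : Fin 3 → ℂ) :
    (fun j => (mulVecC N E j).re) = N *ᵥ (fun j => (E j).re) := by
  funext j
  simp [mulVecC, Matrix.mulVec, dotProduct, Fin.sum_univ_three]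

lemma mulVecC_im (N : Matrix (Fin 3) (Fin 3) ℝ) (E : Fin 3 → ℂ) :
    (fun j => (mulVecC N E j).im) = N *ᵥ (fun j => (E j).im) := by
  funext j
  simp [mulVecC, Matrix.mulVec, dotProduct, Fin.sum_univ_three]

/-- If a C¹ map `F` fixes the sphere of radius `R` pointwise and has
invertible Jacobian there, then for every `x` on the sphere and every `E ∈ ℂ³`, with
`ν = x/|x|`, one has `ν × ((DF(x)ᵀ)⁻¹E) = ν × E`: the tangential component of the
pulled-back field agrees with that of `E` on the sphere. -/
theorem tangential_trace_invariance
    (R : ℝ) (hR : 0 < R) (U : Set (Fin 3 → ℝ)) (hU : IsOpen U)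
    (hsub : {x : Fin 3 → ℝ | enorm3 x = R} ⊆ U)
    (F : (Fin 3 → ℝ) → (Fin 3 → ℝ)) (hF : ContDiffOn ℝ 1 F U)
    (hinv : ∀ x : Fin 3 → ℝ, enorm3 x = R → IsUnit (jac F x))
    (hfix : ∀ x : Fin 3 → ℝ, enorm3 x = R → F x = x) :
    ∀ x : Fin 3 → ℝ, enorm3 x = R → ∀ E : Fin 3 → ℂ,
      crossRC ((enorm3 x)⁻¹ • x) (mulVecC ((jac F x).transpose)⁻¹ E) =
        crossRC ((enorm3 x)⁻¹ • x) E := by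
  intro x hx E
  set M := jac F x with hM
  have hMfix : ∀ v : Fin 3 → ℝ, v ⬝ᵥ x = 0 → M *ᵥ v = v := by
    intro v hv
    rw [hM, jac_mulVec]
    exact tangent_fix R hR U hU hsub F hF hfix x hx v hv
  have hreal : ∀ e : Fin 3 → ℝ,
      crossProduct ((enorm3 x)⁻¹ • x) ((Mᵀ)⁻¹ *ᵥ e) = crossProduct ((enorm3 x)⁻¹ • x) e := by
    intro e
    have h := key_real x M (hinv x hx) hMfix e
    rw [_root_.map_smul, LinearMap.smul_apply, LinearMap.smul_apply, h]
  funext i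
  apply Complex.ext
  · rw [crossRC_re, crossRC_re]
    have : (fun j => (mulVecC (Mᵀ)⁻¹ E j).re) = (Mᵀ)⁻¹ *ᵥ (fun j => (E j).re) :=
      mulVecC_re _ _
    rw [show (fun j => ((mulVecC (M.transpose)⁻¹ E) j).re) = (Mᵀ)⁻¹ *ᵥ (fun j => (E j).re) from this]
    rw [hreal]
  · rw [crossRC_im, crossRC_im]
    rw [show (fun j => ((mulVecC (M.transpose)⁻¹ E) j).im) = (Mᵀ)⁻¹ *ᵥ (fun j => (E j).im) from mulVecC_im _ _]
    rw [hreal]
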